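/- Let s be a nonnegative generalized n-series over ℤ. Then for all m > 0 and n ≥ k ≥ 0, binom(nm, km)_s ≡ binom(n,k)_{s_m} (mod Φ_m(s)), where s_m(j) = s(mj) and Φ_m(s) = ∏_{d ∣ m} s(d)^{μ(m/d)}. -/

import Mathlib

open Finset

namespace SLucasAux

variable {s : ℕ → ℤ}

lemma dvd_shift (h0 : s 0 = 0)
    (hdvd : ∀ n k : ℕ, 0 < k → k < n → s (n - k) ∣ s n - s k)
    (a b : ℕ) (ha : 0 < a) : s a ∣ s (a + b) - s b := by
  rcases Nat.eq_zero_or_pos b with rfl | hb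
  · simp [h0]
  · have := hdvd (a + b) b hb (by omega)
    simpa using this

lemma dvd_mul (h0 : s 0 = 0)
    (hdvd : ∀ n k : ℕ, 0 < k → k < n → s (n - k) ∣ s n - s k)
    (a j : ℕ) (ha : 0 < a) : s a ∣ s (a * j) := by
  induction j with
  | zero => simp [h0]
  | succ j ih =>
    have h1 : s a ∣ s (a + a * j) - s (a * j) := dvd_shift h0 hdvd a (a * j) ha
    have h2 : a * (j + 1) = a + a * j := by ring
    rw [h2]
    have := dvd_add h1 ih
    simpa using this

lemma dvd_of_dvd (h0 : s 0 = 0)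
    (hdvd : ∀ n k : ℕ, 0 < k → k < n → s (n - k) ∣ s n - s k)
    {a b : ℕ} (ha : 0 < a) (hab : a ∣ b) : s a ∣ s b := by
  obtain ⟨c, rfl⟩ := hab
  exact dvd_mul h0 hdvd a c ha

lemma dvd_gcd_aux (h0 : s 0 = 0)
    (hdvd : ∀ n k : ℕ, 0 < k → k < n → s (n - k) ∣ s n - s k)
    (N : ℤ) : ∀ c a b : ℕ, a + b ≤ c → 0 < a → 0 < b →
    N ∣ s a → N ∣ s b → N ∣ s (Nat.gcd a b) := by
  intro c
  induction c with
  | zero => intro a b h ha hb; omega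
  | succ c ih =>
    intro a b hab ha hb hNa hNb
    rcases lt_trichotomy a b with h | h | h
    · have hs : s a ∣ s b - s (b - a) := by
        have := dvd_shift h0 hdvd a (b - a) ha
        rwa [show a + (b - a) = b by omega] at this
      have hN1 : N ∣ s b - s (b - a) := hNa.trans hs
      have hN2 : N ∣ s (b - a) := by
        have := dvd_sub hNb hN1; simpa using this
      have := ih a (b - a) (by omega) ha (by omega) hNa hN2
      rwa [Nat.gcd_sub_self_right h.le] at this
    · subst h; rwa [Nat.gcd_self]
    · have hs : s b ∣ s a - s (a - b) := by
        have := dvd_shift h0 hdvd b (a - b) hb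
        rwa [show b + (a - b) = a by omega] at this
      have hN1 : N ∣ s a - s (a - b) := hNb.trans hs
      have hN2 : N ∣ s (a - b) := by
        have := dvd_sub hNa hN1; simpa using this
      have := ih (a - b) b (by omega) (by omega) hb hN2 hNb
      rwa [Nat.gcd_sub_self_left h.le] at this


lemma dvd_gcd (h0 : s 0 = 0)
    (hdvd : ∀ n k : ℕ, 0 < k → k < n → s (n - k) ∣ s n - s k)
    (N : ℤ) {a b : ℕ} (ha : 0 < a) (hb : 0 < b)
    (hNa : N ∣ s a) (hNb : N ∣ s b) : N ∣ s (Nat.gcd a b) :=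
  dvd_gcd_aux h0 hdvd N (a + b) a b le_rfl ha hb hNa hNb

section Val

variable (p : ℕ) [hp : Fact p.Prime]

lemma e_mono (h0 : s 0 = 0) (hne : ∀ n : ℕ, 0 < n → 0 < s n)
    (hdvd : ∀ n k : ℕ, 0 < k → k < n → s (n - k) ∣ s n - s k)
    {a b : ℕ} (ha : 0 < a) (hb : 0 < b) (hab : a ∣ b) :
    padicValInt p (s a) ≤ padicValInt p (s b) := by
  have hsb : s b ≠ 0 := (hne b hb).ne'
  have h1 : (p : ℤ) ^ padicValInt p (s a) ∣ s b :=
    (padicValInt_dvd (s a)).trans (dvd_of_dvd h0 hdvd ha hab)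
  rcases (padicValInt_dvd_iff _ (s b)).mp h1 with h | h
  · exact absurd h hsb
  · exact h

lemma e_min (h0 : s 0 = 0) (hne : ∀ n : ℕ, 0 < n → 0 < s n)
    (hdvd : ∀ n k : ℕ, 0 < k → k < n → s (n - k) ∣ s n - s k)
    {a b : ℕ} (ha : 0 < a) (hb : 0 < b) :
    padicValInt p (s (Nat.gcd a b))
      = min (padicValInt p (s a)) (padicValInt p (s b)) := by
  have hg : 0 < Nat.gcd a b := Nat.gcd_pos_of_pos_left _ ha
  refine le_antisymm (le_min (e_mono p h0 hne hdvd hg ha (Nat.gcd_dvd_left a b))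
    (e_mono p h0 hne hdvd hg hb (Nat.gcd_dvd_right a b))) ?_
  set x := min (padicValInt p (s a)) (padicValInt p (s b)) with hx
  have h1 : (p : ℤ) ^ x ∣ s a :=
    (pow_dvd_pow _ (min_le_left _ _)).trans (padicValInt_dvd (s a))
  have h2 : (p : ℤ) ^ x ∣ s b :=
    (pow_dvd_pow _ (min_le_right _ _)).trans (padicValInt_dvd (s b))
  have h3 : (p : ℤ) ^ x ∣ s (Nat.gcd a b) := dvd_gcd h0 hdvd _ ha hb h1 h2
  rcases (padicValInt_dvd_iff _ _).mp h3 with h | h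
  · exact absurd h (hne _ hg).ne'
  · exact h


open ArithmeticFunction ArithmeticFunction.Moebius in
lemma key_moebius (h0 : s 0 = 0) (hne : ∀ n : ℕ, 0 < n → 0 < s n)
    (hdvd : ∀ n k : ℕ, 0 < k → k < n → s (n - k) ∣ s n - s k)
    (m : ℕ) (hm : 0 < m) (x : ℕ) (hx1 : 1 ≤ x) (hxE : x ≤ padicValInt p (s m)) :
    ∑ d ∈ m.divisors, (μ (m / d) : ℤ) * (if x ≤ padicValInt p (s d) then (1:ℤ) else 0)
      = if (m.properDivisors).sup (fun d => padicValInt p (s d)) < x then 1 else 0 := by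
  classical
  have hm0 : m ≠ 0 := hm.ne'
  simp_rw [mul_ite, mul_one, mul_zero]
  rw [← Finset.sum_filter]
  set T := m.divisors.filter (fun d => x ≤ padicValInt p (s d)) with hT
  have hmT : m ∈ T := by
    rw [hT, Finset.mem_filter, Nat.mem_divisors]
    exact ⟨⟨dvd_refl m, hm0⟩, hxE⟩
  have hTne : T.Nonempty := ⟨m, hmT⟩
  set g := T.min' hTne with hg
  have hgT : g ∈ T := T.min'_mem hTne
  have hgm : g ∣ m := (Nat.mem_divisors.mp (Finset.mem_filter.mp hgT).1).1
  have hgpos : 0 < g := Nat.pos_of_mem_divisors (Finset.mem_filter.mp hgT).1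
  have hxg : x ≤ padicValInt p (s g) := (Finset.mem_filter.mp hgT).2
  have hgdvd : ∀ d ∈ T, g ∣ d := by
    intro d hd
    obtain ⟨hd1, hd2⟩ := Finset.mem_filter.mp hd
    have hdpos : 0 < d := Nat.pos_of_mem_divisors hd1
    have hGmem : Nat.gcd g d ∈ T := by
      refine Finset.mem_filter.mpr ⟨Nat.mem_divisors.mpr
        ⟨(Nat.gcd_dvd_left g d).trans hgm, hm0⟩, ?_⟩
      rw [e_min p h0 hne hdvd hgpos hdpos]
      exact le_min hxg hd2
    have h1 : g ≤ Nat.gcd g d := T.min'_le _ hGmem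
    have h2 : Nat.gcd g d ≤ g := Nat.le_of_dvd hgpos (Nat.gcd_dvd_left g d)
    have h3 : Nat.gcd g d = g := le_antisymm h2 h1
    rw [← h3]
    exact Nat.gcd_dvd_right g d
  have hTeq : T = m.divisors.filter (fun d => g ∣ d) := by
    ext d
    constructor
    · intro hd
      exact Finset.mem_filter.mpr ⟨(Finset.mem_filter.mp hd).1, hgdvd d hd⟩
    · intro hd
      obtain ⟨hd1, hd2⟩ := Finset.mem_filter.mp hd
      have hdm : d ∣ m := (Nat.mem_divisors.mp hd1).1
      have hdpos : 0 < d := Nat.pos_of_mem_divisors hd1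
      exact Finset.mem_filter.mpr
        ⟨hd1, hxg.trans (e_mono p h0 hne hdvd hgpos hdpos hd2)⟩
  have hsum : ∑ d ∈ T, (μ (m / d) : ℤ)
      = ∑ c ∈ (m / g).divisors, (μ ((m / g) / c) : ℤ) := by
    rw [hTeq]
    refine Finset.sum_nbij' (fun d => d / g) (fun c => g * c) ?_ ?_ ?_ ?_ ?_
    · intro d hd
      obtain ⟨hd1, hd2⟩ := Finset.mem_filter.mp hd
      have hdm : d ∣ m := (Nat.mem_divisors.mp hd1).1
      have hmg0 : m / g ≠ 0 := by
        have := Nat.div_pos (Nat.le_of_dvd hm hgm) hgpos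
        omega
      refine Nat.mem_divisors.mpr ⟨?_, hmg0⟩
      show d / g ∣ m / g
      obtain ⟨a, rfl⟩ := hd2
      obtain ⟨t, ht⟩ := hdm
      rw [Nat.mul_div_cancel_left a hgpos, ht, mul_assoc,
        Nat.mul_div_cancel_left _ hgpos]
      exact dvd_mul_right a t
    · intro c hc
      obtain ⟨hc1, hc2⟩ := Nat.mem_divisors.mp hc
      refine Finset.mem_filter.mpr ⟨Nat.mem_divisors.mpr ⟨?_, hm0⟩, dvd_mul_right g c⟩
      obtain ⟨t, ht⟩ := hc1
      refine ⟨t, ?_⟩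
      rw [mul_assoc, ← ht, Nat.mul_div_cancel' hgm]
    · intro d hd
      exact Nat.mul_div_cancel' (hgdvd d (hTeq ▸ hd))
    · intro c hc
      exact Nat.mul_div_cancel_left c hgpos
    · intro d hd
      obtain ⟨hd1, hd2⟩ := Finset.mem_filter.mp hd
      show (μ (m / d) : ℤ) = (μ (m / g / (d / g)) : ℤ)
      congr 1
      rw [Nat.div_div_eq_div_mul, Nat.mul_div_cancel' hd2]
  rw [hsum, Nat.sum_div_divisors]
  have hz : ∑ c ∈ (m / g).divisors, (μ c : ℤ)
      = if m / g = 1 then 1 else 0 := by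
    rw [← coe_mul_zeta_apply, moebius_mul_coe_zeta, one_apply]
  rw [hz]
  have hiff : m / g = 1 ↔ (m.properDivisors).sup (fun d => padicValInt p (s d)) < x := by
    constructor
    · intro h
      have hgm' : g = m := by
        have := Nat.mul_div_cancel' hgm
        rw [h, mul_one] at this
        exact this
      by_contra hcon
      push_neg at hcon
      obtain ⟨d₀, hd₀, hxd₀⟩ := (Finset.le_sup_iff (by omega : (0:ℕ) < x)).mp hcon
      obtain ⟨hd₀m, hd₀lt⟩ := Nat.mem_properDivisors.mp hd₀
      have hd₀T : d₀ ∈ T := Finset.mem_filter.mpr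
        ⟨Nat.mem_divisors.mpr ⟨hd₀m, hm0⟩, hxd₀⟩
      have := hgdvd d₀ hd₀T
      rw [hgm'] at this
      have hd₀pos : 0 < d₀ := Nat.pos_of_dvd_of_pos hd₀m hm
      exact absurd (Nat.le_of_dvd hd₀pos this) (by omega)
    · intro h
      have hgm' : g = m := by
        by_contra hne'
        have hglt : g < m := lt_of_le_of_ne (Nat.le_of_dvd hm hgm) hne'
        have : g ∈ m.properDivisors := Nat.mem_properDivisors.mpr ⟨hgm, hglt⟩
        have hle : padicValInt p (s g) ≤ (m.properDivisors).sup
            (fun d => padicValInt p (s d)) :=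
          Finset.le_sup (f := fun d => padicValInt p (s d)) this
        omega
      rw [hgm', Nat.div_self hm]
  rw [if_congr hiff rfl rfl]

open ArithmeticFunction ArithmeticFunction.Moebius in
lemma sum_mu_e (h0 : s 0 = 0) (hne : ∀ n : ℕ, 0 < n → 0 < s n)
    (hdvd : ∀ n k : ℕ, 0 < k → k < n → s (n - k) ∣ s n - s k)
    (m : ℕ) (hm : 0 < m) :
    ∑ d ∈ m.divisors, (μ (m / d) : ℤ) * (padicValInt p (s d) : ℤ)
      = (padicValInt p (s m) : ℤ)
        - (((m.properDivisors).sup (fun d => padicValInt p (s d)) : ℕ) : ℤ) := by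
  classical
  set E := padicValInt p (s m) with hE
  set w := (m.properDivisors).sup (fun d => padicValInt p (s d)) with hw
  have hwE : w ≤ E := by
    refine Finset.sup_le fun d hd => ?_
    obtain ⟨hdm, hdlt⟩ := Nat.mem_properDivisors.mp hd
    exact e_mono p h0 hne hdvd (Nat.pos_of_dvd_of_pos hdm hm) hm hdm
  have hstep : ∀ d ∈ m.divisors, (padicValInt p (s d) : ℤ)
      = ∑ x ∈ Icc 1 E, (if x ≤ padicValInt p (s d) then (1:ℤ) else 0) := by
    intro d hd
    have hdm : d ∣ m := (Nat.mem_divisors.mp hd).1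
    have hdE : padicValInt p (s d) ≤ E :=
      e_mono p h0 hne hdvd (Nat.pos_of_dvd_of_pos hdm hm) hm hdm
    rw [Finset.sum_boole]
    have hfe : (Icc 1 E).filter (fun x => x ≤ padicValInt p (s d))
        = Icc 1 (padicValInt p (s d)) := by
      ext y
      simp only [Finset.mem_filter, Finset.mem_Icc]
      omega
    rw [hfe, Nat.card_Icc]
    simp
  calc ∑ d ∈ m.divisors, (μ (m / d) : ℤ) * (padicValInt p (s d) : ℤ)
      = ∑ d ∈ m.divisors, ∑ x ∈ Icc 1 E,
          (μ (m / d) : ℤ) * (if x ≤ padicValInt p (s d) then (1:ℤ) else 0) := by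
        refine Finset.sum_congr rfl fun d hd => ?_
        rw [← Finset.mul_sum, ← hstep d hd]
    _ = ∑ x ∈ Icc 1 E, ∑ d ∈ m.divisors,
          (μ (m / d) : ℤ) * (if x ≤ padicValInt p (s d) then (1:ℤ) else 0) :=
        Finset.sum_comm
    _ = ∑ x ∈ Icc 1 E, (if w < x then (1:ℤ) else 0) := by
        refine Finset.sum_congr rfl fun x hx => ?_
        obtain ⟨hx1, hxE⟩ := Finset.mem_Icc.mp hx
        exact key_moebius p h0 hne hdvd m hm x hx1 hxE
    _ = (((Icc 1 E).filter (fun x => w < x)).card : ℤ) := by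
        rw [Finset.sum_boole]
    _ = (E : ℤ) - (w : ℤ) := by
        have hfe : (Icc 1 E).filter (fun x => w < x) = Icc (w+1) E := by
          ext y
          simp only [Finset.mem_filter, Finset.mem_Icc]
          omega
        rw [hfe, Nat.card_Icc]
        have h1 : E + 1 - (w + 1) = E - w := by omega
        rw [h1, Nat.cast_sub hwE]

lemma padicValRat_zpow (q : ℚ) (hq : q ≠ 0) (z : ℤ) :
    padicValRat p (q ^ z) = z * padicValRat p q := by
  obtain ⟨n, rfl | rfl⟩ := z.eq_nat_or_neg
  · rw [zpow_natCast, padicValRat.pow q]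
  · rw [zpow_neg, zpow_natCast, padicValRat.inv, padicValRat.pow q]
    ring

lemma padicValRat_prod {ι : Type*} (t : Finset ι) (f : ι → ℚ)
    (hf : ∀ i ∈ t, f i ≠ 0) :
    padicValRat p (∏ i ∈ t, f i) = ∑ i ∈ t, padicValRat p (f i) := by
  classical
  induction t using Finset.induction_on with
  | empty => simp
  | insert a u hni ih =>
    rw [Finset.prod_insert hni, Finset.sum_insert hni,
      padicValRat.mul (hf a (Finset.mem_insert_self a u))
        (Finset.prod_ne_zero_iff.mpr fun i hi => hf i (Finset.mem_insert_of_mem hi)),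
      ih fun i hi => hf i (Finset.mem_insert_of_mem hi)]

end Val

/-- `x` approximates `y`: `y ≠ 0` and `p^(v_p(y)+v) ∣ x - y`. -/
def Ap (p : ℕ) (v : ℕ) (x y : ℤ) : Prop :=
  y ≠ 0 ∧ (p : ℤ) ^ (padicValInt p y + v) ∣ x - y

section ApLemmas

variable {p v : ℕ} [hp : Fact p.Prime]

lemma Ap.one : Ap p v 1 1 := ⟨one_ne_zero, by simp⟩

lemma Ap.mul {x x' y y' : ℤ} (h : Ap p v x y) (h' : Ap p v x' y') :
    Ap p v (x * x') (y * y') := by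
  obtain ⟨hy, hd⟩ := h
  obtain ⟨hy', hd'⟩ := h'
  refine ⟨mul_ne_zero hy hy', ?_⟩
  rw [padicValInt.mul hy hy']
  have hx : (p : ℤ) ^ padicValInt p y ∣ x := by
    have h1 : (p : ℤ) ^ padicValInt p y ∣ y := padicValInt_dvd _
    have h2 : (p : ℤ) ^ padicValInt p y ∣ x - y :=
      (pow_dvd_pow _ (Nat.le_add_right _ _)).trans hd
    have := dvd_add h2 h1
    simpa using this
  have key : x * x' - y * y' = x * (x' - y') + y' * (x - y) := by ring
  rw [key]
  refine dvd_add ?_ ?_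
  · have he : (p : ℤ) ^ (padicValInt p y + padicValInt p y' + v)
        = (p : ℤ) ^ padicValInt p y * (p : ℤ) ^ (padicValInt p y' + v) := by
      rw [← pow_add]
      ring_nf
    rw [he]
    exact mul_dvd_mul hx hd'
  · have he : (p : ℤ) ^ (padicValInt p y + padicValInt p y' + v)
        = (p : ℤ) ^ padicValInt p y' * (p : ℤ) ^ (padicValInt p y + v) := by
      rw [← pow_add]
      ring_nf
    rw [he]
    exact mul_dvd_mul (padicValInt_dvd _) hd

lemma Ap.prod {ι : Type*} (t : Finset ι) (f g : ι → ℤ)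
    (h : ∀ i ∈ t, Ap p v (f i) (g i)) :
    Ap p v (∏ i ∈ t, f i) (∏ i ∈ t, g i) := by
  classical
  induction t using Finset.induction_on with
  | empty => simpa using Ap.one
  | insert a u hni ih =>
    rw [Finset.prod_insert hni, Finset.prod_insert hni]
    exact Ap.mul (h a (Finset.mem_insert_self a u))
      (ih fun i hi => h i (Finset.mem_insert_of_mem hi))

end ApLemmas

lemma prod_range_eq_mul_last {M : ℕ} (hM : 0 < M) (f : ℕ → ℤ) :
    ∏ i ∈ range M, f i = (∏ i ∈ range (M-1), f i) * f (M-1) := by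
  conv_lhs => rw [show M = (M-1)+1 by omega]
  rw [Finset.prod_range_succ]

lemma fac_split (m : ℕ) (hm : 0 < m) (t : ℕ) :
    ∏ i ∈ range (t * m), s (i+1)
      = (∏ i ∈ range t, s (m * (i+1)))
        * ∏ j ∈ range t, ∏ r ∈ range (m-1), s (j*m + (r+1)) := by
  induction t with
  | zero => simp
  | succ t ih =>
    have h1 : (t+1) * m = t*m + m := by ring
    rw [h1, Finset.prod_range_add, ih, Finset.prod_range_succ, Finset.prod_range_succ]
    have h2 : ∏ i ∈ range m, s (t*m + i + 1)
        = (∏ r ∈ range (m-1), s (t*m + (r+1))) * s (m * (t+1)) := by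
      rw [prod_range_eq_mul_last hm (f := fun i => s (t*m + i + 1))]
      have ha : ∀ i : ℕ, t*m + i + 1 = t*m + (i+1) := fun i => by omega
      have hb : t*m + (m-1) + 1 = m * (t+1) := by
        have := hm
        cases m with
        | zero => omega
        | succ m' => ring_nf; omega
      rw [hb]
      refine congrArg (· * s (m * (t+1))) (Finset.prod_congr rfl fun i _ => ?_)
      rw [ha i]
    rw [h2]
    ring

open ArithmeticFunction ArithmeticFunction.Moebius in
lemma val_phi (p : ℕ) [Fact p.Prime] (hne : ∀ n : ℕ, 0 < n → 0 < s n)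
    (m : ℕ) (hm : 0 < m) (Φ : ℤ)
    (hΦ : (Φ : ℚ) = ∏ e ∈ m.divisors, (s e : ℚ) ^ (μ (m / e))) :
    (padicValInt p Φ : ℤ)
      = ∑ d ∈ m.divisors, (μ (m / d) : ℤ) * (padicValInt p (s d) : ℤ) := by
  have hsne : ∀ d ∈ m.divisors, ((s d : ℚ)) ≠ 0 := by
    intro d hd
    have := hne d (Nat.pos_of_mem_divisors hd)
    exact_mod_cast this.ne'
  have h1 := congrArg (padicValRat p) hΦ
  rw [padicValRat_prod p _ _ (fun d hd => zpow_ne_zero _ (hsne d hd)),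
    padicValRat.of_int] at h1
  rw [h1]
  refine Finset.sum_congr rfl fun d hd => ?_
  rw [padicValRat_zpow p _ (hsne d hd), padicValRat.of_int]

end SLucasAux


open Finset in
/-- `b` is the s-binomial coefficient `binom(n,k)_s` (with the convention that it is
`0` when `k > n`): `k!_s (n-k)!_s · b = n!_s`. -/
def IsSBinom (s : ℕ → ℤ) (n k : ℕ) (b : ℤ) : Prop :=
  if k ≤ n then
    (∏ i ∈ range k, s (i + 1)) * (∏ i ∈ range (n - k), s (i + 1)) * b
      = ∏ i ∈ range n, s (i + 1)
  else b = 0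


open Finset SLucasAux in
/-- Composite version of the s-Lucas theorem:
`binom(nm, km)_s ≡ binom(n,k)_{s_m} (mod Φ_m(s))`. -/
theorem s_lucas_composite (s : ℕ → ℤ)
    (h0 : s 0 = 0)
    (hne : ∀ n : ℕ, 0 < n → 0 < s n)
    (hdvd : ∀ n k : ℕ, 0 < k → k < n → s (n - k) ∣ s n - s k)
    (m n k : ℕ) (hm : 0 < m) (hk : k ≤ n)
    (Φ : ℤ)
    (hΦ : (Φ : ℚ) = ∏ e ∈ m.divisors, (s e : ℚ) ^ (ArithmeticFunction.moebius (m / e)))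
    (B B' : ℤ)
    (hB : IsSBinom s (n * m) (k * m) B)
    (hB' : IsSBinom (fun j => s (m * j)) n k B') :
    Φ ∣ B - B' := by
  classical
  set F : ℕ → ℤ := fun t => ∏ i ∈ range t, s (m * (i+1)) with hF
  set Q : ℕ → ℤ := fun t => ∏ j ∈ range t, ∏ r ∈ range (m-1), s (j*m + (r+1)) with hQ
  set b := n - k with hb
  have hkm : k * m ≤ n * m := Nat.mul_le_mul_right m hk
  have hBif : (∏ i ∈ range (k*m), s (i+1)) * (∏ i ∈ range (b*m), s (i+1)) * B
      = ∏ i ∈ range (n*m), s (i+1) := by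
    have h := hB
    rw [IsSBinom, if_pos hkm] at h
    rwa [show n*m - k*m = b*m by rw [hb, Nat.sub_mul]] at h
  have hB'e : F k * F b * B' = F n := by
    have h := hB'
    rw [IsSBinom, if_pos hk] at h
    exact h
  have hFpos : ∀ t, 0 < F t := by
    intro t
    refine Finset.prod_pos fun i _ => hne _ (by positivity)
  have hformula : Q k * Q b * B = Q n * B' := by
    have h1 : (F k * Q k) * ((F b * Q b) * B) = F n * Q n := by
      rw [← fac_split m hm k, ← fac_split m hm b, ← fac_split m hm n]
      rw [← hBif]; ring
    have h2 : (F k * F b) * (Q k * Q b * B) = (F k * F b) * (Q n * B') := by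
      calc (F k * F b) * (Q k * Q b * B) = (F k * Q k) * ((F b * Q b) * B) := by ring
        _ = F n * Q n := h1
        _ = (F k * F b * B') * Q n := by rw [hB'e]
        _ = (F k * F b) * (Q n * B') := by ring
    exact mul_left_cancel₀ (mul_pos (hFpos k) (hFpos b)).ne' h2
  have hΦ0 : Φ ≠ 0 := by
    intro h
    rw [h] at hΦ
    have : (∏ e ∈ m.divisors, (s e : ℚ) ^ (ArithmeticFunction.moebius (m / e))) ≠ 0 := by
      refine Finset.prod_ne_zero_iff.mpr fun d hd => ?_
      refine zpow_ne_zero _ ?_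
      have := hne d (Nat.pos_of_mem_divisors hd)
      exact_mod_cast this.ne'
    exact this (by exact_mod_cast hΦ.symm)
  have main : ∀ pp : ℕ, pp.Prime → (pp:ℤ)^(padicValInt pp Φ) ∣ B - B' := by
    intro pp hpp
    haveI : Fact pp.Prime := ⟨hpp⟩
    set v := padicValInt pp Φ with hv
    rcases Nat.eq_zero_or_pos v with hv0 | hv1
    · rw [hv0]
      simp
    set w := (m.properDivisors).sup (fun d => padicValInt pp (s d)) with hw
    set E := padicValInt pp (s m) with hE
    have hvwE : v + w = E := by
      have h1 := val_phi (s := s) pp hne m hm Φ hΦ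
      have h2 := sum_mu_e (s := s) pp h0 hne hdvd m hm
      rw [h2] at h1
      omega
    have herw : ∀ r, 0 < r → r < m → padicValInt pp (s r) ≤ w := by
      intro r hr hrm
      have hgd : Nat.gcd r m ∈ m.properDivisors := by
        refine Nat.mem_properDivisors.mpr ⟨Nat.gcd_dvd_right r m, ?_⟩
        exact lt_of_le_of_lt (Nat.le_of_dvd hr (Nat.gcd_dvd_left r m)) hrm
      have h1 : padicValInt pp (s (Nat.gcd r m)) ≤ w :=
        Finset.le_sup (f := fun d => padicValInt pp (s d)) hgd
      have h2 : padicValInt pp (s (Nat.gcd r m))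
          = min (padicValInt pp (s r)) (padicValInt pp (s m)) :=
        e_min pp h0 hne hdvd hr hm
      omega
    have hfac : ∀ j r, r < m - 1 → Ap pp v (s (j*m + (r+1))) (s (r+1)) := by
      intro j r hr
      have hrm : r + 1 < m := by omega
      refine ⟨(hne _ (Nat.succ_pos r)).ne', ?_⟩
      rcases Nat.eq_zero_or_pos j with rfl | hj
      · simp
      · have hjm : 0 < j * m := by positivity
        have h1 : s (j*m) ∣ s (j*m + (r+1)) - s (r+1) :=
          dvd_shift h0 hdvd (j*m) (r+1) hjm
        have h2 : (pp:ℤ)^(padicValInt pp (s (r+1)) + v) ∣ s (j*m) := by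
          have h3 : E ≤ padicValInt pp (s (j*m)) :=
            e_mono pp h0 hne hdvd hm hjm (Dvd.intro_left j rfl)
          refine (pow_dvd_pow _ ?_).trans (padicValInt_dvd _)
          have := herw (r+1) (Nat.succ_pos r) hrm
          omega
        exact h2.trans h1
    set R := ∏ r ∈ range (m-1), s (r+1) with hR
    have hQap : ∀ t, Ap pp v (Q t) (R^t) := by
      intro t
      have hconst : R^t = ∏ _j ∈ range t, R := by
        rw [Finset.prod_const, Finset.card_range]
      rw [hconst, hQ]
      refine Ap.prod _ _ _ fun j _ => ?_
      refine Ap.prod _ _ _ fun r hr => ?_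
      exact hfac j r (Finset.mem_range.mp hr)
    have hQn := hQap n
    have hQkb : Ap pp v (Q k * Q b) (R^n) := by
      have h := Ap.mul (hQap k) (hQap b)
      rwa [← pow_add, show k + b = n by omega] at h
    obtain ⟨hRn0, hd1⟩ := hQn
    obtain ⟨-, hd2⟩ := hQkb
    set Ey := padicValInt pp (R^n) with hEy
    have hdiff : (pp:ℤ)^(Ey + v) ∣ Q k * Q b - Q n := by
      have := dvd_sub hd2 hd1
      simpa using this
    have hQnEy : (pp:ℤ)^Ey ∣ Q n := by
      have h1 : (pp:ℤ)^Ey ∣ Q n - R^n := (pow_dvd_pow _ (Nat.le_add_right _ _)).trans hd1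
      have h2 : (pp:ℤ)^Ey ∣ R^n := padicValInt_dvd _
      have := dvd_add h1 h2
      simpa using this
    obtain ⟨u, hu⟩ := hQnEy
    have hpu : ¬ (pp:ℤ) ∣ u := by
      intro hdvdu
      obtain ⟨u', rfl⟩ := hdvdu
      have h1 : (pp:ℤ)^(Ey+1) ∣ Q n := ⟨u', by rw [hu, pow_succ]; ring⟩
      have h3 : (pp:ℤ)^(Ey+1) ∣ Q n - R^n := (pow_dvd_pow _ (by omega)).trans hd1
      have h2 : (pp:ℤ)^(Ey+1) ∣ R^n := by
        have := dvd_sub h1 h3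
        simpa using this
      rcases (padicValInt_dvd_iff (Ey+1) (R^n)).mp h2 with h | h
      · exact hRn0 h
      · omega
    have hQB : Q n * (B' - B) = (Q k * Q b - Q n) * B := by
      have h := hformula
      ring_nf
      ring_nf at h
      linarith [h]
    have hdvd2 : (pp:ℤ)^(Ey+v) ∣ Q n * (B' - B) := hQB ▸ (hdiff.mul_right B)
    rw [hu] at hdvd2
    have hppne : ((pp:ℤ))^Ey ≠ 0 := by
      refine pow_ne_zero _ ?_
      exact_mod_cast hpp.ne_zero
    have hcan : (pp:ℤ)^v ∣ u * (B' - B) := by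
      rw [pow_add, mul_assoc] at hdvd2
      exact (mul_dvd_mul_iff_left hppne).mp hdvd2
    have hprime : Prime ((pp:ℤ)) := Int.prime_iff_natAbs_prime.mpr (by simpa using hpp)
    have hcop : IsCoprime ((pp:ℤ)^v) u :=
      ((hprime.coprime_iff_not_dvd).mpr hpu).pow_left
    have hres : (pp:ℤ)^v ∣ B' - B := hcop.dvd_of_dvd_mul_left hcan
    have : (pp:ℤ)^v ∣ -(B' - B) := hres.neg_right
    simpa using this
  rw [← Int.natAbs_dvd_natAbs]
  rw [Nat.dvd_iff_prime_pow_dvd_dvd]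
  intro q c hq hqc
  haveI : Fact q.Prime := ⟨hq⟩
  have hΦa : Φ.natAbs ≠ 0 := Int.natAbs_ne_zero.mpr hΦ0
  have hc : c ≤ padicValNat q Φ.natAbs := (padicValNat_dvd_iff_le hΦa).mp hqc
  have h1 : (q:ℤ)^c ∣ B - B' :=
    (pow_dvd_pow (q:ℤ) hc).trans (main q hq)
  have h2 : ((q^c : ℕ) : ℤ) ∣ B - B' := by exact_mod_cast h1
  have h3 := (Int.natAbs_dvd_natAbs (a := ((q^c : ℕ) : ℤ)) (b := B - B')).mpr h2
  rwa [Int.natAbs_natCast] at h3
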